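/- Let U be a bounded space-time cylinder I × J. There exists C > 0 such that ‖f‖_{L^{10}(U)} ≤ C ‖f‖_{L^∞(J;L²(I))}^{4/5} ‖f‖_{L²(J;W^{2,2}(I))}^{1/5} for all f ∈ L^∞(J;L²(I)) ∩ L²(J;W^{2,2}(I)) with f(·,t) compactly supported in I for a.e. t. -/

import Mathlib

open MeasureTheory Set ENNReal NNReal

/-- A continuous function has finite `L²` norm on a bounded interval. -/
private lemma aux_eLpNorm_ne_top {a b : ℝ} (u : ℝ → ℝ) (hu : Continuous u) :
    eLpNorm u 2 (volume.restrict (Ioo a b)) ≠ ∞ := by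
  obtain ⟨C, hC⟩ := (isCompact_Icc (a := a) (b := b)).exists_bound_of_continuousOn hu.continuousOn
  refine ne_of_lt (lt_of_le_of_lt (eLpNorm_le_of_ae_bound (C := max C 0) ?_) ?_)
  · filter_upwards [ae_restrict_mem measurableSet_Ioo] with x hx
    exact le_trans (hC x (Ioo_subset_Icc_self hx)) (le_max_left _ _)
  · exact ENNReal.mul_lt_top
      (ENNReal.rpow_lt_top_of_nonneg (by positivity) (by simp [Real.volume_Ioo]))
      ENNReal.ofReal_lt_top

private lemma aux_sq_eLpNorm (u : ℝ → ℝ) (μ : Measure ℝ) :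
    (eLpNorm u 2 μ) ^ (2:ℕ) = ∫⁻ x, (‖u x‖₊ : ℝ≥0∞) * ‖u x‖₊ ∂μ := by
  rw [eLpNorm_eq_lintegral_rpow_enorm_toReal two_ne_zero ENNReal.ofNat_ne_top, ← ENNReal.rpow_natCast,
    ← ENNReal.rpow_mul]
  norm_num
  congr 1
  funext x
  rw [enorm_eq_nnnorm]
  ring

/-- Hölder / Cauchy–Schwarz. -/
private lemma aux_holder (u v : ℝ → ℝ) (μ : Measure ℝ) (hu : AEMeasurable u μ)
    (hv : AEMeasurable v μ) :
    ∫⁻ x, (‖u x‖₊ : ℝ≥0∞) * ‖v x‖₊ ∂μ ≤ eLpNorm u 2 μ * eLpNorm v 2 μ := by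
  have conj : Real.HolderConjugate 2 2 := Real.HolderConjugate.two_two
  have h := ENNReal.lintegral_mul_le_Lp_mul_Lq μ conj
    (hu.nnnorm.coe_nnreal_ennreal) (hv.nnnorm.coe_nnreal_ennreal)
  simp only [Pi.mul_apply] at h
  rw [eLpNorm_eq_lintegral_rpow_enorm_toReal two_ne_zero ENNReal.ofNat_ne_top,
    eLpNorm_eq_lintegral_rpow_enorm_toReal two_ne_zero ENNReal.ofNat_ne_top]
  norm_num at h ⊢
  exact h

/-- Agmon-type pointwise bound. -/
private lemma aux_agmon {a b : ℝ} {g g' : ℝ → ℝ}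
    (hg : ∀ x, HasDerivAt g (g' x) x) (hsupp : tsupport g ⊆ Ioo a b)
    (cg : Continuous g) (cg' : Continuous g') (x : ℝ) :
    (‖g x‖₊ : ℝ≥0∞) * ‖g x‖₊ ≤
      2 * ∫⁻ y in Ioo a b, (‖g y‖₊ : ℝ≥0∞) * ‖g' y‖₊ := by
  by_cases hx : x ∈ Ioo a b
  · have ha0 : g a = 0 := image_eq_zero_of_notMem_tsupport (fun h => (lt_irrefl a (hsupp h).1))
    have hftc : ∫ y in a..x, (g' y * g y + g y * g' y) = g x * g x - g a * g a :=
      intervalIntegral.integral_eq_sub_of_hasDerivAt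
        (fun y _ => (hg y).mul (hg y))
        (((cg'.mul cg).add (cg.mul cg')).intervalIntegrable a x)
    have hmono : ∀ y, g' y * g y + g y * g' y ≤ 2 * (|g y| * |g' y|) := by
      intro y
      have h1 : g y * g' y ≤ |g y * g' y| := le_abs_self _
      have h2 : |g y * g' y| = |g y| * |g' y| := abs_mul _ _
      nlinarith [h1, h2]
    have hint1 : IntegrableOn (fun y => g' y * g y + g y * g' y) (Ioo a x) volume :=
      (((cg'.mul cg).add (cg.mul cg')).integrableOn_Icc).mono_set Ioo_subset_Icc_self
    have hint2 : IntegrableOn (fun y => 2 * (|g y| * |g' y|)) (Ioo a b) volume :=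
      ((continuous_const.mul ((cg.abs).mul (cg'.abs))).integrableOn_Icc).mono_set
        Ioo_subset_Icc_self
    have hreal : g x * g x ≤ ∫ y in Ioo a b, 2 * (|g y| * |g' y|) := by
      calc g x * g x = g x * g x - g a * g a := by rw [ha0]; ring
        _ = ∫ y in a..x, (g' y * g y + g y * g' y) := hftc.symm
        _ = ∫ y in Ioo a x, (g' y * g y + g y * g' y) := by
            rw [intervalIntegral.integral_of_le hx.1.le, integral_Ioc_eq_integral_Ioo]
        _ ≤ ∫ y in Ioo a x, 2 * (|g y| * |g' y|) :=
            setIntegral_mono_on hint1 (hint2.mono_set (Ioo_subset_Ioo le_rfl hx.2.le))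
              measurableSet_Ioo (fun y _ => hmono y)
        _ ≤ ∫ y in Ioo a b, 2 * (|g y| * |g' y|) := by
            apply setIntegral_mono_set hint2
            · filter_upwards with y using by positivity
            · exact HasSubset.Subset.eventuallyLE (Ioo_subset_Ioo le_rfl hx.2.le)
    have hnn : (‖g x‖₊ : ℝ≥0∞) * ‖g x‖₊ = ENNReal.ofReal (g x * g x) := by
      rw [← abs_mul_abs_self, ENNReal.ofReal_mul (abs_nonneg _),
        ← enorm_eq_nnnorm, Real.enorm_eq_ofReal_abs]
    rw [hnn]
    calc ENNReal.ofReal (g x * g x)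
        ≤ ENNReal.ofReal (∫ y in Ioo a b, 2 * (|g y| * |g' y|)) := ENNReal.ofReal_le_ofReal hreal
      _ = ∫⁻ y in Ioo a b, ENNReal.ofReal (2 * (|g y| * |g' y|)) := by
          rw [← ofReal_integral_eq_lintegral_ofReal hint2]
          filter_upwards with y using by positivity
      _ = ∫⁻ y in Ioo a b, 2 * ((‖g y‖₊ : ℝ≥0∞) * ‖g' y‖₊) := by
          congr 1
          funext y
          rw [ENNReal.ofReal_mul (by norm_num), ENNReal.ofReal_mul (abs_nonneg _),
            ← enorm_eq_nnnorm, Real.enorm_eq_ofReal_abs, ← enorm_eq_nnnorm, Real.enorm_eq_ofReal_abs]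
          norm_num
      _ = 2 * ∫⁻ y in Ioo a b, (‖g y‖₊ : ℝ≥0∞) * ‖g' y‖₊ :=
          lintegral_const_mul' 2 _ ENNReal.ofNat_ne_top
  · have h0 : g x = 0 := image_eq_zero_of_notMem_tsupport (fun h => hx (hsupp h))
    simp [h0]

/-- Integration by parts bound. -/
private lemma aux_ibp {a b : ℝ} (hab : a < b) {g g' g'' : ℝ → ℝ}
    (hg : ∀ x, HasDerivAt g (g' x) x) (hg' : ∀ x, HasDerivAt g' (g'' x) x)
    (hsupp : tsupport g ⊆ Ioo a b)
    (hD : eLpNorm g'' 2 (volume.restrict (Ioo a b)) ≠ ∞) :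
    ∫⁻ y in Ioo a b, (‖g' y‖₊ : ℝ≥0∞) * ‖g' y‖₊ ≤
      ∫⁻ y in Ioo a b, (‖g y‖₊ : ℝ≥0∞) * ‖g'' y‖₊ := by
  haveI : IsFiniteMeasure (volume.restrict (Ioo a b)) :=
    ⟨by rw [Measure.restrict_apply_univ]; simp [Real.volume_Ioo]⟩
  have cg : Continuous g := continuous_iff_continuousAt.2 fun x => (hg x).continuousAt
  have cg' : Continuous g' := continuous_iff_continuousAt.2 fun x => (hg' x).continuousAt
  have hg''m : Measurable g'' := by
    have : g'' = deriv g' := funext fun x => ((hg' x).deriv).symm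
    rw [this]; exact measurable_deriv g'
  obtain ⟨C, hC⟩ := (isCompact_Icc (a := a) (b := b)).exists_bound_of_continuousOn cg.continuousOn
  have hbg : ∀ x, ‖g x‖ ≤ max C 0 := by
    intro x
    by_cases hx : x ∈ Icc a b
    · exact le_trans (hC x hx) (le_max_left _ _)
    · have : g x = 0 := image_eq_zero_of_notMem_tsupport
        (fun h => hx (Ioo_subset_Icc_self (hsupp h)))
      simp [this]
  have hg''int : IntegrableOn g'' (Ioo a b) volume := by
    have hmem : MemLp g'' 2 (volume.restrict (Ioo a b)) :=
      ⟨hg''m.aestronglyMeasurable, lt_top_iff_ne_top.2 hD⟩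
    exact memLp_one_iff_integrable.mp (hmem.mono_exponent one_le_two)
  have hgg''int : IntegrableOn (fun y => g y * g'' y) (Ioo a b) volume :=
    hg''int.bdd_mul (c := max C 0) cg.aestronglyMeasurable (Filter.Eventually.of_forall hbg)
  have hgg''Ioc : IntegrableOn (fun y => g y * g'' y) (Ioc a b) volume :=
    (integrableOn_Ioc_iff_integrableOn_Ioo).2 hgg''int
  have II1 : IntervalIntegrable (fun y => g' y * g' y) volume a b :=
    (cg'.mul cg').intervalIntegrable a b
  have II2 : IntervalIntegrable (fun y => g y * g'' y) volume a b := by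
    rw [intervalIntegrable_iff_integrableOn_Ioc_of_le hab.le]; exact hgg''Ioc
  have ha0 : g a = 0 := image_eq_zero_of_notMem_tsupport (fun h => lt_irrefl a (hsupp h).1)
  have hb0 : g b = 0 := image_eq_zero_of_notMem_tsupport (fun h => lt_irrefl b (hsupp h).2)
  have hftc : ∫ y in a..b, (g' y * g' y + g y * g'' y) = g b * g' b - g a * g' a :=
    intervalIntegral.integral_eq_sub_of_hasDerivAt
      (fun y _ => (hg y).mul (hg' y)) (II1.add II2)
  have hsplit : ∫ y in a..b, (g' y * g' y) = - ∫ y in a..b, (g y * g'' y) := by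
    have := intervalIntegral.integral_add II1 II2
    rw [hftc, ha0, hb0] at this
    linarith [this]
  have hIoo : ∫ y in Ioo a b, (g' y * g' y) ≤ ∫ y in Ioo a b, |g y| * |g'' y| := by
    have e1 : ∫ y in Ioo a b, (g' y * g' y) = ∫ y in a..b, (g' y * g' y) := by
      rw [intervalIntegral.integral_of_le hab.le, integral_Ioc_eq_integral_Ioo]
    have e2 : ∫ y in a..b, (g y * g'' y) = ∫ y in Ioo a b, (g y * g'' y) := by
      rw [intervalIntegral.integral_of_le hab.le, integral_Ioc_eq_integral_Ioo]
    rw [e1, hsplit, e2]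
    calc - ∫ y in Ioo a b, (g y * g'' y) ≤ |∫ y in Ioo a b, (g y * g'' y)| := neg_le_abs _
      _ ≤ ∫ y in Ioo a b, |g y| * |g'' y| := by
        simpa using norm_integral_le_integral_norm (μ := volume.restrict (Ioo a b))
          (fun y => g y * g'' y)
  have hint1 : IntegrableOn (fun y => g' y * g' y) (Ioo a b) volume :=
    ((cg'.mul cg').integrableOn_Icc).mono_set Ioo_subset_Icc_self
  have habs : IntegrableOn (fun y => |g y| * |g'' y|) (Ioo a b) volume := by
    apply hgg''int.abs.congr
    filter_upwards with y using abs_mul _ _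
  calc ∫⁻ y in Ioo a b, (‖g' y‖₊ : ℝ≥0∞) * ‖g' y‖₊
      = ∫⁻ y in Ioo a b, ENNReal.ofReal (g' y * g' y) := by
        congr 1; funext y
        rw [← abs_mul_abs_self, ENNReal.ofReal_mul (abs_nonneg _),
          ← enorm_eq_nnnorm, Real.enorm_eq_ofReal_abs]
    _ = ENNReal.ofReal (∫ y in Ioo a b, (g' y * g' y)) := by
        rw [← ofReal_integral_eq_lintegral_ofReal hint1]
        filter_upwards with y using mul_self_nonneg _
    _ ≤ ENNReal.ofReal (∫ y in Ioo a b, |g y| * |g'' y|) := ENNReal.ofReal_le_ofReal hIoo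
    _ = ∫⁻ y in Ioo a b, ENNReal.ofReal (|g y| * |g'' y|) := by
        rw [← ofReal_integral_eq_lintegral_ofReal habs]
        filter_upwards with y using by positivity
    _ = ∫⁻ y in Ioo a b, (‖g y‖₊ : ℝ≥0∞) * ‖g'' y‖₊ := by
        congr 1; funext y
        rw [ENNReal.ofReal_mul (abs_nonneg _), ← enorm_eq_nnnorm, Real.enorm_eq_ofReal_abs,
          ← enorm_eq_nnnorm, Real.enorm_eq_ofReal_abs]

/-- The spatial estimate: `∫ |g|^10 ≤ 16 ‖g‖₂⁸ ‖g''‖₂²`. -/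
private lemma aux_spatial {a b : ℝ} (hab : a < b) {g g' g'' : ℝ → ℝ}
    (hg : ∀ x, HasDerivAt g (g' x) x) (hg' : ∀ x, HasDerivAt g' (g'' x) x)
    (hsupp : tsupport g ⊆ Ioo a b) :
    ∫⁻ x in Ioo a b, (‖g x‖₊ : ℝ≥0∞) ^ (10:ℝ) ≤
      16 * (eLpNorm g 2 (volume.restrict (Ioo a b))) ^ (8:ℕ) *
        (eLpNorm g'' 2 (volume.restrict (Ioo a b))) ^ (2:ℕ) := by
  set ν := volume.restrict (Ioo a b) with hν
  set A := eLpNorm g 2 ν with hA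
  set B := eLpNorm g' 2 ν with hB
  set D := eLpNorm g'' 2 ν with hD
  have cg : Continuous g := continuous_iff_continuousAt.2 fun x => (hg x).continuousAt
  have cg' : Continuous g' := continuous_iff_continuousAt.2 fun x => (hg' x).continuousAt
  have hg''m : Measurable g'' := by
    have : g'' = deriv g' := funext fun x => ((hg' x).deriv).symm
    rw [this]; exact measurable_deriv g'
  have hAne : A ≠ ∞ := aux_eLpNorm_ne_top g cg
  have hBne : B ≠ ∞ := aux_eLpNorm_ne_top g' cg'
  have hagmon : ∀ x, (‖g x‖₊ : ℝ≥0∞) * ‖g x‖₊ ≤ 2 * (A * B) := fun x =>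
    le_trans (aux_agmon hg hsupp cg cg' x)
      (mul_le_mul_right (aux_holder g g' ν cg.aemeasurable cg'.aemeasurable) 2)
  by_cases hAz : A = 0
  · have hz : ∀ x, (‖g x‖₊ : ℝ≥0∞) = 0 := by
      intro x
      have := hagmon x
      rw [hAz] at this
      simpa using this
    have : ∫⁻ x in Ioo a b, (‖g x‖₊ : ℝ≥0∞) ^ (10:ℝ) = 0 := by
      rw [← lintegral_zero (μ := ν)]
      congr 1; funext x
      rw [hz x]
      simp [ENNReal.zero_rpow_of_pos]
    rw [this]; exact zero_le
  by_cases hDt : D = ∞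
  · refine le_trans le_top (le_of_eq ?_)
    rw [hDt]
    rw [ENNReal.top_pow (by norm_num), ENNReal.mul_top]
    exact mul_ne_zero (by norm_num) (pow_ne_zero _ hAz)
  · have hB2 : B ^ (2:ℕ) ≤ A * D := by
      rw [hB, aux_sq_eLpNorm g' ν]
      exact le_trans (aux_ibp hab hg hg' hsupp hDt)
        (aux_holder g g'' ν cg.aemeasurable hg''m.aemeasurable)
    have hA2 : ∫⁻ x in Ioo a b, (‖g x‖₊ : ℝ≥0∞) * ‖g x‖₊ = A ^ (2:ℕ) := by
      rw [hA, aux_sq_eLpNorm g ν]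
    calc ∫⁻ x in Ioo a b, (‖g x‖₊ : ℝ≥0∞) ^ (10:ℝ)
        = ∫⁻ x in Ioo a b,
            (((‖g x‖₊ : ℝ≥0∞) * ‖g x‖₊) ^ (4:ℕ)) * ((‖g x‖₊ : ℝ≥0∞) * ‖g x‖₊) := by
          congr 1; funext x
          rw [show (10:ℝ) = ((10:ℕ):ℝ) by norm_num, ENNReal.rpow_natCast]
          ring
      _ ≤ ∫⁻ x in Ioo a b, ((2 * (A * B)) ^ (4:ℕ)) * ((‖g x‖₊ : ℝ≥0∞) * ‖g x‖₊) :=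
          lintegral_mono fun x => mul_le_mul' (pow_le_pow_left' (hagmon x) 4) le_rfl
      _ = ((2 * (A * B)) ^ (4:ℕ)) * ∫⁻ x in Ioo a b, (‖g x‖₊ : ℝ≥0∞) * ‖g x‖₊ :=
          lintegral_const_mul' _ _
            (ENNReal.pow_ne_top (ENNReal.mul_ne_top ENNReal.ofNat_ne_top
              (ENNReal.mul_ne_top hAne hBne)))
      _ = 16 * A ^ (4:ℕ) * (B ^ (2:ℕ)) ^ (2:ℕ) * A ^ (2:ℕ) := by rw [hA2]; ring
      _ ≤ 16 * A ^ (4:ℕ) * (A * D) ^ (2:ℕ) * A ^ (2:ℕ) := by gcongr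
      _ = 16 * A ^ (8:ℕ) * D ^ (2:ℕ) := by ring

/-- Space-time interpolation inequality on a bounded cylinder `U = J × I`:
`‖f‖_{L^{10}(U)} ≤ C ‖f‖_{L^∞(J;L²(I))}^{4/5} ‖f‖_{L²(J;W^{2,2}(I))}^{1/5}`
for `f(·,t)` compactly supported in `I` for a.e. `t`. Here `fx`, `fxx` are the
first and second spatial derivatives of `f`, and the `L²(J;W^{2,2}(I))` norm is
`(∫_J (‖f(t)‖_{L²}² + ‖f_x(t)‖_{L²}² + ‖f_{xx}(t)‖_{L²}²))^{1/2}`. -/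
theorem spacetime_L10_interpolation (a b t₁ t₂ : ℝ) (hab : a < b) (ht : t₁ < t₂) :
    ∃ C : ℝ≥0, 0 < C ∧ ∀ (f fx fxx : ℝ → ℝ → ℝ),
      (∀ t x, HasDerivAt (f t) (fx t x) x) →
      (∀ t x, HasDerivAt (fx t) (fxx t x) x) →
      (∀ᵐ t ∂(volume.restrict (Ioo t₁ t₂)), tsupport (f t) ⊆ Ioo a b) →
      eLpNorm (fun p : ℝ × ℝ => f p.1 p.2) 10
          ((volume.restrict (Ioo t₁ t₂)).prod (volume.restrict (Ioo a b))) ≤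
        (C : ℝ≥0∞) *
          (essSup (fun t => eLpNorm (f t) 2 (volume.restrict (Ioo a b)))
              (volume.restrict (Ioo t₁ t₂))) ^ ((4:ℝ)/5) *
          ((∫⁻ t in Ioo t₁ t₂,
              (eLpNorm (f t) 2 (volume.restrict (Ioo a b)) ^ 2
                + eLpNorm (fx t) 2 (volume.restrict (Ioo a b)) ^ 2
                + eLpNorm (fxx t) 2 (volume.restrict (Ioo a b)) ^ 2)) ^ ((1:ℝ)/2)) ^ ((1:ℝ)/5) := by
  refine ⟨2, by norm_num, fun f fx fxx hdf hdfx hsupp => ?_⟩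
  set ν := volume.restrict (Ioo a b) with hνdef
  set μ := volume.restrict (Ioo t₁ t₂) with hμdef
  set A : ℝ → ℝ≥0∞ := fun t => eLpNorm (f t) 2 ν with hAdef
  set B : ℝ → ℝ≥0∞ := fun t => eLpNorm (fx t) 2 ν with hBdef
  set D : ℝ → ℝ≥0∞ := fun t => eLpNorm (fxx t) 2 ν with hDdef
  set M := essSup A μ with hMdef
  set S2 := ∫⁻ t in Ioo t₁ t₂, (A t ^ 2 + B t ^ 2 + D t ^ 2) with hS2def
  have hcoe : ((2:ℝ≥0) : ℝ≥0∞) = (2 : ℝ≥0∞) := by norm_num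
  rw [hcoe]
  -- rewrite the LHS
  have hL : eLpNorm (fun p : ℝ × ℝ => f p.1 p.2) 10 (μ.prod ν) =
      (∫⁻ p, ((‖f p.1 p.2‖₊ : ℝ≥0∞)) ^ (10:ℝ) ∂(μ.prod ν)) ^ ((1:ℝ)/10) := by
    rw [eLpNorm_eq_lintegral_rpow_enorm_toReal (by norm_num) (by norm_num)]
    norm_num
    rfl
  -- measurable minorant
  obtain ⟨G, hGm, hGle, hGeq⟩ := exists_measurable_le_lintegral_eq (μ.prod ν)
    (fun p : ℝ × ℝ => ((‖f p.1 p.2‖₊ : ℝ≥0∞)) ^ (10:ℝ))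
  set Φ : ℝ → ℝ≥0∞ := fun t => ∫⁻ x, G (t, x) ∂ν with hΦdef
  have hΦm : Measurable Φ := hGm.lintegral_prod_right'
  have hiter : ∫⁻ p, ((‖f p.1 p.2‖₊ : ℝ≥0∞)) ^ (10:ℝ) ∂(μ.prod ν) = ∫⁻ t, Φ t ∂μ := by
    rw [hGeq, lintegral_prod _ hGm.aemeasurable]
  have hΦle : ∀ᵐ t ∂μ, Φ t ≤ 16 * (A t) ^ (8:ℕ) * (D t) ^ (2:ℕ) := by
    filter_upwards [hsupp] with t h
    exact le_trans (lintegral_mono fun x => hGle (t, x))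
      (aux_spatial hab (hdf t) (hdfx t) h)
  have hSrw : (S2 ^ ((1:ℝ)/2)) ^ ((1:ℝ)/5) = S2 ^ ((1:ℝ)/10) := by
    rw [← ENNReal.rpow_mul]; norm_num
  by_cases hM : M = ∞
  · by_cases hS2z : S2 = 0
    · -- corner case : everything vanishes
      have hae5 : ∀ᵐ t ∂μ, Φ t ≤ 16 * (A t ^ 2 + B t ^ 2 + D t ^ 2) ^ (5:ℕ) := by
        filter_upwards [hΦle] with t h
        refine le_trans h ?_
        have h1 : A t ^ (2:ℕ) ≤ A t ^ 2 + B t ^ 2 + D t ^ 2 :=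
          le_trans (self_le_add_right _ _) (self_le_add_right _ _)
        have h2 : D t ^ (2:ℕ) ≤ A t ^ 2 + B t ^ 2 + D t ^ 2 := le_add_self
        calc 16 * A t ^ (8:ℕ) * D t ^ (2:ℕ)
            = 16 * (A t ^ (2:ℕ)) ^ (4:ℕ) * D t ^ (2:ℕ) := by ring
          _ ≤ 16 * (A t ^ 2 + B t ^ 2 + D t ^ 2) ^ (4:ℕ) *
                (A t ^ 2 + B t ^ 2 + D t ^ 2) := by gcongr
          _ = 16 * (A t ^ 2 + B t ^ 2 + D t ^ 2) ^ (5:ℕ) := by ring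
      set ψ : ℝ → ℝ≥0∞ := fun t => (Φ t / 16) ^ ((1:ℝ)/5) with hψdef
      have hψm : Measurable ψ :=
        ENNReal.continuous_rpow_const.measurable.comp (hΦm.div_const 16)
      have hψle : ∀ᵐ t ∂μ, ψ t ≤ A t ^ 2 + B t ^ 2 + D t ^ 2 := by
        filter_upwards [hae5] with t h
        have h1 : Φ t / 16 ≤ (A t ^ 2 + B t ^ 2 + D t ^ 2) ^ (5:ℕ) :=
          ENNReal.div_le_of_le_mul (by rw [mul_comm] at h; exact h)
        calc ψ t ≤ ((A t ^ 2 + B t ^ 2 + D t ^ 2) ^ (5:ℕ)) ^ ((1:ℝ)/5) :=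
            ENNReal.rpow_le_rpow h1 (by norm_num)
          _ = A t ^ 2 + B t ^ 2 + D t ^ 2 := by
            rw [← ENNReal.rpow_natCast, ← ENNReal.rpow_mul]
            norm_num
      have h0 : ∫⁻ t, ψ t ∂μ = 0 :=
        le_antisymm (le_trans (lintegral_mono_ae hψle) (le_of_eq hS2z)) (zero_le)
      have hψ0 : ∀ᵐ t ∂μ, ψ t = 0 := (lintegral_eq_zero_iff hψm).1 h0
      have hΦ0 : ∀ᵐ t ∂μ, Φ t = 0 := by
        filter_upwards [hψ0] with t h
        have hdiv : Φ t / 16 = 0 := by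
          rcases (ENNReal.rpow_eq_zero_iff).1 h with ⟨h1, _⟩ | ⟨_, h2⟩
          · exact h1
          · norm_num at h2
        rcases ENNReal.div_eq_zero_iff.1 hdiv with h1 | h1
        · exact h1
        · norm_num at h1
      have hΦint : ∫⁻ t, Φ t ∂μ = 0 := (lintegral_eq_zero_iff hΦm).2 hΦ0
      rw [hL, hiter, hΦint, ENNReal.zero_rpow_of_pos (by norm_num)]
      exact zero_le
    · -- RHS is infinite
      refine le_trans le_top (le_of_eq ?_)
      rw [hSrw, hM, ENNReal.top_rpow_of_pos (by norm_num), ENNReal.mul_top (by norm_num),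
        ENNReal.top_mul]
      intro hc
      rcases (ENNReal.rpow_eq_zero_iff).1 hc with ⟨h1, _⟩ | ⟨_, h2⟩
      · exact hS2z h1
      · norm_num at h2
  · -- main case : M finite
    have hcne : (16:ℝ≥0∞) * M ^ (8:ℕ) ≠ ∞ :=
      ENNReal.mul_ne_top (by norm_num) (ENNReal.pow_ne_top hM)
    have hae2 : ∀ᵐ t ∂μ, Φ t ≤ (16 * M ^ (8:ℕ)) * (A t ^ 2 + B t ^ 2 + D t ^ 2) := by
      filter_upwards [hΦle, ae_le_essSup (μ := μ) A] with t h1 h2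
      calc Φ t ≤ 16 * A t ^ (8:ℕ) * D t ^ (2:ℕ) := h1
        _ ≤ 16 * M ^ (8:ℕ) * D t ^ (2:ℕ) := by gcongr
        _ ≤ (16 * M ^ (8:ℕ)) * (A t ^ 2 + B t ^ 2 + D t ^ 2) :=
            mul_le_mul_right le_add_self _
    have htot : ∫⁻ t, Φ t ∂μ ≤ 16 * M ^ (8:ℕ) * S2 :=
      le_trans (lintegral_mono_ae hae2) (le_of_eq (lintegral_const_mul' _ _ hcne))
    rw [hL, hiter]
    calc (∫⁻ t, Φ t ∂μ) ^ ((1:ℝ)/10)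
        ≤ (16 * M ^ (8:ℕ) * S2) ^ ((1:ℝ)/10) := ENNReal.rpow_le_rpow htot (by norm_num)
      _ = (16:ℝ≥0∞) ^ ((1:ℝ)/10) * (M ^ (8:ℕ)) ^ ((1:ℝ)/10) * S2 ^ ((1:ℝ)/10) := by
          rw [ENNReal.mul_rpow_of_nonneg _ _ (by norm_num),
            ENNReal.mul_rpow_of_nonneg _ _ (by norm_num)]
      _ ≤ 2 * M ^ ((4:ℝ)/5) * (S2 ^ ((1:ℝ)/2)) ^ ((1:ℝ)/5) := by
          rw [hSrw]
          have h16 : (16:ℝ≥0∞) ^ ((1:ℝ)/10) ≤ 2 := by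
            calc (16:ℝ≥0∞) ^ ((1:ℝ)/10) ≤ ((2:ℝ≥0∞) ^ (10:ℕ)) ^ ((1:ℝ)/10) :=
                ENNReal.rpow_le_rpow (by norm_num) (by norm_num)
              _ = 2 := by
                rw [← ENNReal.rpow_natCast, ← ENNReal.rpow_mul]
                norm_num
          have hM8 : (M ^ (8:ℕ)) ^ ((1:ℝ)/10) = M ^ ((4:ℝ)/5) := by
            rw [← ENNReal.rpow_natCast, ← ENNReal.rpow_mul]
            norm_num
          rw [hM8]
          exact mul_le_mul_left (mul_le_mul_left h16 _) _
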